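/- Let G and X₀ be groups, μ : X₀ → Aut(G) a group homomorphism, and ∂ : G → X₀ a group homomorphism satisfying ∂(μ(x)(g)) = x·∂(g)·x⁻¹ for all x ∈ X₀, g ∈ G. Let P₀ ⊆ X₀ be a submonoid. Then S = {(a,b) ∈ G × X₀ : b ∈ P₀ and ∂(a)·b ∈ P₀} is a submonoid of the semidirect product G ⋊_μ X₀, and the map σ(a,b) = (a⁻¹, ∂(a)·b) maps S into S. -/
import Mathlib


/-- The positive cone `S = {(a,b) : b ∈ P₀ ∧ δ a * b ∈ P₀}` of the effective internal
equivalence relation determined by `δ`, inside the semidirect product `G ⋊[μ] X₀`. -/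
def effectiveCone {G X₀ : Type*} [Group G] [Group X₀] (μ : X₀ →* MulAut G)
    (δ : G →* X₀) (P₀ : Submonoid X₀) : Set (G ⋊[μ] X₀) :=
  {g | g.right ∈ P₀ ∧ δ g.left * g.right ∈ P₀}

/-- `S` is a submonoid of `G ⋊[μ] X₀`, and the inversion
`σ (a, b) = (a⁻¹, δ a * b)` maps `S` into `S`. -/
theorem effectiveCone_submonoid_and_inversion {G X₀ : Type*} [Group G] [Group X₀]
    (μ : X₀ →* MulAut G) (δ : G →* X₀)
    (precrossed : ∀ (x : X₀) (g : G), δ (μ x g) = x * δ g * x⁻¹)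
    (P₀ : Submonoid X₀) :
    (∃ M : Submonoid (G ⋊[μ] X₀), (M : Set (G ⋊[μ] X₀)) = effectiveCone μ δ P₀) ∧
    (∀ g ∈ effectiveCone μ δ P₀,
      (⟨g.left⁻¹, δ g.left * g.right⟩ : G ⋊[μ] X₀) ∈ effectiveCone μ δ P₀) := by
  constructor
  · refine ⟨{ carrier := effectiveCone μ δ P₀, one_mem' := ?_, mul_mem' := ?_ }, rfl⟩
    · rintro ⟨a, b⟩ ⟨a', b'⟩ ⟨hb, hab⟩ ⟨hb', hab'⟩
      refine ⟨P₀.mul_mem hb hb', ?_⟩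
      have : δ ((⟨a, b⟩ : G ⋊[μ] X₀) * ⟨a', b'⟩).left *
          ((⟨a, b⟩ : G ⋊[μ] X₀) * ⟨a', b'⟩).right
          = (δ a * b) * (δ a' * b') := by
        show δ (a * μ b a') * (b * b') = _
        rw [map_mul, precrossed]
        group
      rw [this]
      exact P₀.mul_mem hab hab'
    · constructor <;> simpa using P₀.one_mem
  · rintro ⟨a, b⟩ ⟨hb, hab⟩
    refine ⟨hab, ?_⟩
    show δ a⁻¹ * (δ a * b) ∈ P₀
    simpa [map_inv, mul_assoc] using hb
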